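/- Let n(z) = (2π)^{-1/2} e^{-z²/2} be the standard normal density and let z₀ be the unique positive solution of (z₀²/2)e^{z₀²/2} = e^{z₀²/2} + 1. Fix A ≥ 0 and B ∈ ℝ with A + |B| > 0, and define P^opt = sup { A∫z²n(z)ω(dz) + B∫zn(z)ω(dz) : ω finite signed measure on ℝ, ‖ω‖_TV ≤ 1, ∫n(z)ω(dz) = 0 }, P^BF = 2A e^{-z₀²/2}/√(2π), P^RR = |B| e^{-1/2}/√(2π), and α = P^RR/(P^RR + P^BF). Then P^RR ≥ α·P^opt and P^BF ≥ (1−α)·P^opt. -/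

import Mathlib

open MeasureTheory Set

/-- Integral of a function with respect to a finite signed measure, defined via
the Jordan decomposition. -/
noncomputable def signedIntegral (f : ℝ → ℝ) (ω : SignedMeasure ℝ) : ℝ :=
  (∫ x, f x ∂ω.toJordanDecomposition.posPart)
    - (∫ x, f x ∂ω.toJordanDecomposition.negPart)

/-- The standard normal density. -/
noncomputable def stdNormalDensity (z : ℝ) : ℝ :=
  (Real.sqrt (2 * Real.pi))⁻¹ * Real.exp (-z ^ 2 / 2)

lemma aux_abs_mul_exp_le (z : ℝ) : |z| * Real.exp (-z ^ 2 / 2) ≤ Real.exp (-(1:ℝ)/2) := by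
  have h1 := Real.add_one_le_exp ((z ^ 2 - 1) / 2)
  have h2 : |z| ≤ (z ^ 2 + 1) / 2 := by nlinarith [sq_abs z, sq_nonneg (|z| - 1)]
  have h3 : Real.exp ((z ^ 2 - 1) / 2) * Real.exp (-z ^ 2 / 2) = Real.exp (-(1:ℝ)/2) := by
    rw [← Real.exp_add]; ring_nf
  have hep := Real.exp_pos (-z ^ 2 / 2)
  nlinarith [Real.exp_pos ((z ^ 2 - 1) / 2)]

lemma aux_sq_mul_exp_le (z : ℝ) : z ^ 2 * Real.exp (-z ^ 2 / 2) ≤ 2 * Real.exp (-1) := by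
  have h1 := Real.add_one_le_exp (z ^ 2 / 2 - 1)
  have h3 : Real.exp (z ^ 2 / 2 - 1) * Real.exp (-z ^ 2 / 2) = Real.exp (-1) := by
    rw [← Real.exp_add]; ring_nf
  have hep := Real.exp_pos (-z ^ 2 / 2)
  nlinarith [Real.exp_pos (z ^ 2 / 2 - 1)]

lemma aux_abs_sub_mul_exp_le {c : ℝ} (hc : 0 < c) (hcc : c = 2 * Real.exp (-(c + 2) / 2))
    (z : ℝ) : |z ^ 2 - c| * Real.exp (-z ^ 2 / 2) ≤ c := by
  have hep := Real.exp_pos (-z ^ 2 / 2)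
  have hee : Real.exp (-z ^ 2 / 2) ≤ 1 := by
    rw [show (1:ℝ) = Real.exp 0 by simp]
    exact Real.exp_le_exp.mpr (by nlinarith [sq_nonneg z])
  rcases le_or_gt (z ^ 2) c with h | h
  · rw [abs_of_nonpos (by linarith)]
    nlinarith [sq_nonneg z]
  · rw [abs_of_pos (by linarith)]
    have h1 := Real.add_one_le_exp ((z ^ 2 - c - 2) / 2)
    have h3 : Real.exp ((z ^ 2 - c - 2) / 2) * Real.exp (-z ^ 2 / 2)
        = Real.exp (-(c + 2) / 2) := by
      rw [← Real.exp_add]; ring_nf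
    nlinarith [Real.exp_pos ((z ^ 2 - c - 2) / 2)]

lemma aux_continuous_stdNormalDensity : Continuous stdNormalDensity := by
  unfold stdNormalDensity
  fun_prop

set_option maxHeartbeats 1000000 in
/-- Performance guarantee of the universal butterfly and risk
reversal: with `P^opt` the optimal profit over vega-neutral portfolios of total
variation at most one, `P^BF = 2A e^{-z₀²/2}/√(2π)`, `P^RR = |B| e^{-1/2}/√(2π)`
and `α = P^RR/(P^RR + P^BF)`, one has `P^RR ≥ α P^opt` and
`P^BF ≥ (1−α) P^opt`. -/
theorem butterfly_risk_reversal_performance_guarantee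
    (z₀ : ℝ) (hz₀_pos : 0 < z₀)
    (hz₀_eq : (z₀ ^ 2 / 2) * Real.exp (z₀ ^ 2 / 2) = Real.exp (z₀ ^ 2 / 2) + 1)
    (A B : ℝ) (hA : 0 ≤ A) (hAB : 0 < A + |B|)
    (Popt PBF PRR α : ℝ)
    (hPopt : Popt = sSup {r : ℝ | ∃ ω : SignedMeasure ℝ,
      ω.totalVariation univ ≤ 1 ∧
      signedIntegral stdNormalDensity ω = 0 ∧
      r = A * signedIntegral (fun z => z ^ 2 * stdNormalDensity z) ω
          + B * signedIntegral (fun z => z * stdNormalDensity z) ω})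
    (hPBF : PBF = 2 * A * Real.exp (-z₀ ^ 2 / 2) / Real.sqrt (2 * Real.pi))
    (hPRR : PRR = |B| * Real.exp (-(1:ℝ)/2) / Real.sqrt (2 * Real.pi))
    (hα : α = PRR / (PRR + PBF)) :
    α * Popt ≤ PRR ∧ (1 - α) * Popt ≤ PBF := by
  have hπ : 0 < Real.sqrt (2 * Real.pi) := Real.sqrt_pos.mpr (by positivity)
  set s := Real.sqrt (2 * Real.pi) with hs
  -- the butterfly constant
  set c : ℝ := 2 * Real.exp (-z₀ ^ 2 / 2) with hcdef
  have hc : 0 < c := by positivity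
  have hE := Real.exp_pos (z₀ ^ 2 / 2)
  have hEinv : Real.exp (-z₀ ^ 2 / 2) = (Real.exp (z₀ ^ 2 / 2))⁻¹ := by
    rw [← Real.exp_neg]; ring_nf
  -- z₀² = 2 + c
  have hz2 : z₀ ^ 2 = 2 + c := by
    rw [hcdef, hEinv]
    field_simp
    nlinarith [hz₀_eq]
  have hcc : c = 2 * Real.exp (-(c + 2) / 2) := by
    have h : -(c + 2) / 2 = -z₀ ^ 2 / 2 := by rw [hz2]; ring
    rw [h]
  have hPBF' : PBF = A * c / s := by rw [hPBF, hcdef]; ring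
  -- nonnegativity
  have hPBF0 : 0 ≤ PBF := by rw [hPBF']; positivity
  have hPRR0 : 0 ≤ PRR := by rw [hPRR]; positivity
  set M := PRR + PBF with hM
  have hM0 : 0 < M := by
    rcases lt_or_eq_of_le hA with hA' | hA'
    · have : 0 < PBF := by rw [hPBF']; positivity
      linarith
    · have hB : 0 < |B| := by rw [← hA'] at hAB; simpa using hAB
      have : 0 < PRR := by rw [hPRR]; positivity
      linarith
  -- the key bound : Popt ≤ M
  have hPle : Popt ≤ M := by
    rw [hPopt]
    apply Real.sSup_le _ (le_of_lt hM0)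
    rintro r ⟨ω, hTV, hvega, hr⟩
    set μp := ω.toJordanDecomposition.posPart with hμp
    set μn := ω.toJordanDecomposition.negPart with hμn
    -- the combined payoff function
    set g : ℝ → ℝ := fun z => (A * (z ^ 2 - c) + B * z) * stdNormalDensity z with hg
    have hgcont : Continuous g := by
      apply Continuous.mul _ aux_continuous_stdNormalDensity
      fun_prop
    -- pointwise bound on g
    have hgb : ∀ z, ‖g z‖ ≤ M := by
      intro z
      have hnd : stdNormalDensity z = s⁻¹ * Real.exp (-z ^ 2 / 2) := rfl
      have h1 : ‖g z‖ ≤ (A * |z ^ 2 - c| + |B| * |z|) * stdNormalDensity z := by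
        rw [hg, Real.norm_eq_abs]
        have hnd0 : 0 ≤ stdNormalDensity z := by rw [hnd]; positivity
        rw [abs_mul, abs_of_nonneg hnd0]
        gcongr
        calc |A * (z ^ 2 - c) + B * z| ≤ |A * (z ^ 2 - c)| + |B * z| := abs_add_le _ _
          _ = A * |z ^ 2 - c| + |B| * |z| := by rw [abs_mul, abs_mul, abs_of_nonneg hA]
      have h2 : (A * |z ^ 2 - c| + |B| * |z|) * stdNormalDensity z ≤ M := by
        rw [hnd, hM, hPRR, hPBF']
        have hb1 := aux_abs_sub_mul_exp_le hc hcc z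
        have hb2 := aux_abs_mul_exp_le z
        have hsi : 0 ≤ s⁻¹ := by positivity
        have hB0 : (0:ℝ) ≤ |B| := abs_nonneg B
        have : (A * |z ^ 2 - c| + |B| * |z|) * Real.exp (-z ^ 2 / 2)
            ≤ A * c + |B| * Real.exp (-(1:ℝ)/2) := by
          have e1 : A * (|z ^ 2 - c| * Real.exp (-z ^ 2 / 2)) ≤ A * c :=
            mul_le_mul_of_nonneg_left hb1 hA
          have e2 : |B| * (|z| * Real.exp (-z ^ 2 / 2)) ≤ |B| * Real.exp (-(1:ℝ)/2) :=
            mul_le_mul_of_nonneg_left hb2 hB0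
          nlinarith
        calc (A * |z ^ 2 - c| + |B| * |z|) * (s⁻¹ * Real.exp (-z ^ 2 / 2))
            = ((A * |z ^ 2 - c| + |B| * |z|) * Real.exp (-z ^ 2 / 2)) * s⁻¹ := by ring
          _ ≤ (A * c + |B| * Real.exp (-(1:ℝ)/2)) * s⁻¹ := by gcongr
          _ = |B| * Real.exp (-(1:ℝ)/2) / s + A * c / s := by ring
      exact h1.trans h2
    -- integrability of the pieces
    have hmeas : ∀ (μ : Measure ℝ) [IsFiniteMeasure μ],
        Integrable (fun z => z ^ 2 * stdNormalDensity z) μ ∧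
        Integrable (fun z => z * stdNormalDensity z) μ ∧
        Integrable stdNormalDensity μ := by
      intro μ _
      have hnd : ∀ z, stdNormalDensity z = s⁻¹ * Real.exp (-z ^ 2 / 2) := fun z => rfl
      have hsi : 0 ≤ s⁻¹ := by positivity
      have hcs := aux_continuous_stdNormalDensity
      refine ⟨?_, ?_, ?_⟩
      · refine (integrable_const (2 * Real.exp (-1) * s⁻¹)).mono'
          (((continuous_pow 2).mul hcs).aestronglyMeasurable) ?_
        filter_upwards with z
        rw [Real.norm_eq_abs, hnd z, abs_of_nonneg (by positivity)]
        have := aux_sq_mul_exp_le z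
        calc z ^ 2 * (s⁻¹ * Real.exp (-z ^ 2 / 2))
            = (z ^ 2 * Real.exp (-z ^ 2 / 2)) * s⁻¹ := by ring
          _ ≤ 2 * Real.exp (-1) * s⁻¹ := by gcongr
      · refine (integrable_const (Real.exp (-(1:ℝ)/2) * s⁻¹)).mono'
          ((continuous_id.mul hcs).aestronglyMeasurable) ?_
        filter_upwards with z
        rw [Real.norm_eq_abs, hnd z, abs_mul]
        have := aux_abs_mul_exp_le z
        have h0 : |s⁻¹ * Real.exp (-z ^ 2 / 2)| = s⁻¹ * Real.exp (-z ^ 2 / 2) :=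
          abs_of_nonneg (by positivity)
        rw [h0]
        calc |z| * (s⁻¹ * Real.exp (-z ^ 2 / 2))
            = (|z| * Real.exp (-z ^ 2 / 2)) * s⁻¹ := by ring
          _ ≤ Real.exp (-(1:ℝ)/2) * s⁻¹ := by gcongr
      · refine (integrable_const s⁻¹).mono' hcs.aestronglyMeasurable ?_
        filter_upwards with z
        rw [Real.norm_eq_abs, hnd z, abs_of_nonneg (by positivity)]
        have : Real.exp (-z ^ 2 / 2) ≤ 1 := by
          rw [show (1:ℝ) = Real.exp 0 by simp]
          exact Real.exp_le_exp.mpr (by nlinarith [sq_nonneg z])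
        nlinarith
    obtain ⟨hip2, hip1, hip0⟩ := hmeas μp
    obtain ⟨hin2, hin1, hin0⟩ := hmeas μn
    -- rewrite g-integral
    have hgsplit : ∀ (μ : Measure ℝ), Integrable (fun z => z ^ 2 * stdNormalDensity z) μ →
        Integrable (fun z => z * stdNormalDensity z) μ → Integrable stdNormalDensity μ →
        ∫ z, g z ∂μ = A * ∫ z, z ^ 2 * stdNormalDensity z ∂μ
          + B * ∫ z, z * stdNormalDensity z ∂μ - A * c * ∫ z, stdNormalDensity z ∂μ := by
      intro μ h2 h1 h0
      have : (fun z => g z) = fun z => A * (z ^ 2 * stdNormalDensity z)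
          + B * (z * stdNormalDensity z) - A * c * stdNormalDensity z := by
        funext z; rw [hg]; ring
      have hfA : Integrable (fun z => A * (z ^ 2 * stdNormalDensity z)) μ := h2.const_mul A
      have hfB : Integrable (fun z => B * (z * stdNormalDensity z)) μ := h1.const_mul B
      have hfAB : Integrable (fun z => A * (z ^ 2 * stdNormalDensity z)
          + B * (z * stdNormalDensity z)) μ := hfA.add hfB
      have hfC : Integrable (fun z => A * c * stdNormalDensity z) μ := h0.const_mul (A * c)
      rw [this, integral_sub hfAB hfC, integral_add hfA hfB]
      simp only [integral_const_mul]
    have hIg : (∫ z, g z ∂μp) - (∫ z, g z ∂μn) = r := by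
      unfold signedIntegral at hvega
      rw [← hμp, ← hμn] at hvega
      rw [hgsplit μp hip2 hip1 hip0, hgsplit μn hin2 hin1 hin0, hr]
      unfold signedIntegral
      rw [← hμp, ← hμn]
      linear_combination (-(A * c)) * hvega
    -- bound the integrals
    have hbp : ‖∫ z, g z ∂μp‖ ≤ M * (μp univ).toReal :=
      norm_integral_le_of_norm_le_const (Filter.Eventually.of_forall hgb)
    have hbn : ‖∫ z, g z ∂μn‖ ≤ M * (μn univ).toReal :=
      norm_integral_le_of_norm_le_const (Filter.Eventually.of_forall hgb)
    -- total variation bound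
    have hTV' : (μp univ).toReal + (μn univ).toReal ≤ 1 := by
      have h1 : ω.totalVariation univ = μp univ + μn univ := rfl
      rw [h1] at hTV
      have h2 := ENNReal.toReal_mono (by norm_num) hTV
      rwa [ENNReal.toReal_add (measure_ne_top μp univ) (measure_ne_top μn univ),
        ENNReal.toReal_one] at h2
    have := abs_le.mp (Real.norm_eq_abs _ ▸ hbp)
    have := abs_le.mp (Real.norm_eq_abs _ ▸ hbn)
    have htp : (0:ℝ) ≤ (μp univ).toReal := ENNReal.toReal_nonneg
    have htn : (0:ℝ) ≤ (μn univ).toReal := ENNReal.toReal_nonneg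
    nlinarith [hIg]
  -- conclude
  have hαval : α * M = PRR := by
    rw [hα, hM]; field_simp; exact mul_div_cancel_right₀ PRR (ne_of_gt (by linarith : (0:ℝ) < PRR + PBF))
  have hα0 : 0 ≤ α := by rw [hα]; positivity
  have hα1 : α ≤ 1 := by
    rw [hα]
    apply div_le_one_of_le₀ (by linarith) (by linarith)
  constructor
  · calc α * Popt ≤ α * M := by gcongr
      _ = PRR := hαval
  · calc (1 - α) * Popt ≤ (1 - α) * M := by gcongr
      _ = M - α * M := by ring
      _ = PBF := by rw [hαval, hM]; ring
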